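/- (Degree-lowering inequality for the dual function.) With F, G_{l−1} defined as below, for every ξ_l ∈ 𝔽_p one has 𝔼_{x ∈ 𝔽_p^D} |F̂(x; v_l; ξ_l)|² ≤ 𝔼_{x ∈ 𝔽_p^D} |G_{l−1}(x)|², where F̂(x; v_l; ξ_l) := 𝔼_{n ∈ 𝔽_p} F(x + n v_l) e_p(−n ξ_l), F is the dual function F(x) := 𝔼_{y,y' ∈ 𝔽_p} θ(y) conj(θ(y')) [∏_{i=1}^{l−1} f_i(x + P_i(y)v_i − P_l(y')v_l) conj(f_i)(x + P_i(y')v_i − P_l(y')v_l)] f_l(x + P_l(y)v_l − P_l(y')v_l) ∏_{i=l+1}^k e_p((P_i(y)−P_i(y'))ξ_i), and G_{l−1}(x) := 𝔼_{y' ∈ 𝔽_p} conj(θ)(y') ∏_{i=1}^{l−1} conj(f_i)(x + P_i(y') v_i) ∏_{i=l}^k e_p(−P_i(y') ξ_i). -/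

import Mathlib

open Finset

/-- The additive character `e_p(x) = exp(2πi x / p)` on `𝔽_p`. -/
noncomputable def ep (p : ℕ) (x : ZMod p) : ℂ :=
  Complex.exp (2 * Real.pi * Complex.I * (x.val : ℂ) / p)

/-- The weighted multilinear averaging operator
`G_{l,k}^θ(x) = 𝔼_y θ(y) ∏_{i=1}^l f_i(x + P_i(y) v_i) ∏_{i=l+1}^k e_p(P_i(y) ξ_i)`. -/
noncomputable def Gop (p D k l : ℕ) [NeZero p] (θ : ZMod p → ℂ)
    (f : Fin k → (Fin D → ZMod p) → ℂ) (v : Fin k → Fin D → ZMod p)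
    (P : Fin k → ZMod p → ZMod p) (ξ : Fin k → ZMod p) (x : Fin D → ZMod p) : ℂ :=
  (∑ y : ZMod p, θ y
      * (∏ i ∈ Finset.univ.filter (fun i : Fin k => i.val < l), f i (x + P i y • v i))
      * ∏ i ∈ Finset.univ.filter (fun i : Fin k => l ≤ i.val), ep p (P i y * ξ i)) / p

/-- The dual function `F_{l,k}^θ` associated to the weighted averaging operator. -/
noncomputable def Fdual (p D k l : ℕ) [NeZero p] (hl : 1 ≤ l) (hlk : l ≤ k)
    (θ : ZMod p → ℂ) (f : Fin k → (Fin D → ZMod p) → ℂ) (v : Fin k → Fin D → ZMod p)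
    (P : Fin k → ZMod p → ZMod p) (ξ : Fin k → ZMod p) (x : Fin D → ZMod p) : ℂ :=
  let li : Fin k := ⟨l - 1, by omega⟩
  (∑ y : ZMod p, ∑ y' : ZMod p, θ y * star (θ y')
      * (∏ i ∈ Finset.univ.filter (fun i : Fin k => i.val + 1 < l),
          f i (x + P i y • v i - P li y' • v li)
            * star (f i (x + P i y' • v i - P li y' • v li)))
      * f li (x + P li y • v li - P li y' • v li)
      * ∏ i ∈ Finset.univ.filter (fun i : Fin k => l ≤ i.val),
          ep p ((P i y - P i y') * ξ i)) / ((p : ℂ) * p)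


lemma ep_eq' (p : ℕ) (x : ZMod p) :
    ep p x = Complex.exp (((2*Real.pi*(x.val:ℝ)/p : ℝ) : ℂ) * Complex.I) := by
  unfold ep; congr 1; push_cast; ring

lemma abs_ep (p : ℕ) (x : ZMod p) : ‖ep p x‖ = 1 := by
  rw [ep_eq']; exact Complex.norm_exp_ofReal_mul_I _

lemma ep_add (p : ℕ) [NeZero p] (a b : ZMod p) : ep p (a + b) = ep p a * ep p b := by
  have hp : (p:ℂ) ≠ 0 := Nat.cast_ne_zero.mpr (NeZero.ne p)
  unfold ep
  rw [← Complex.exp_add]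
  have hv : ((a+b).val : ℕ) + p * ((a.val + b.val)/p) = a.val + b.val := by
    rw [ZMod.val_add]; exact Nat.mod_add_div _ _
  have h2 : ((a+b).val : ℂ) = (a.val:ℂ) + (b.val:ℂ) - (p:ℂ) * (((a.val+b.val)/p : ℕ):ℂ) := by
    have := congrArg (Nat.cast : ℕ → ℂ) hv
    push_cast at this
    linear_combination this
  have hq : ((((a.val+b.val)/p : ℕ):ℤ):ℂ) = (((a.val+b.val)/p : ℕ):ℂ) := by norm_cast
  have key : (2*Real.pi*Complex.I*((a+b).val:ℂ)/p)
      = (2*Real.pi*Complex.I*(a.val:ℂ)/p + 2*Real.pi*Complex.I*((b.val:ℂ))/p)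
        - ((((a.val+b.val)/p : ℕ):ℤ):ℂ) * (2*Real.pi*Complex.I) := by
    rw [h2, hq]; field_simp
  rw [key, Complex.exp_sub, Complex.exp_int_mul_two_pi_mul_I, div_one]

set_option maxHeartbeats 2000000 in
/-- Degree-lowering inequality: the Fourier mass of the dual function at any single
frequency `ξ_l` along `v_l` is controlled by the `L²`-mass of the shorter weighted
averaging operator `G_{l-1}`. -/
theorem degree_lowering (p : ℕ) [Fact p.Prime] (D k l : ℕ) (hD : 1 ≤ D)
    (hl : 2 ≤ l) (hlk : l ≤ k)
    (θ : ZMod p → ℂ) (hθ : ∀ y, ‖θ y‖ ≤ 1)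
    (f : Fin k → (Fin D → ZMod p) → ℂ) (hf : ∀ i x, ‖f i x‖ ≤ 1)
    (v : Fin k → Fin D → ZMod p)
    (P : Fin k → ZMod p → ZMod p) (ξ : Fin k → ZMod p) :
    (∑ x : Fin D → ZMod p,
        ‖(∑ n : ZMod p,
            Fdual p D k l (by omega) hlk θ f v P ξ (x + n • v ⟨l - 1, by omega⟩)
              * ep p (-(n * ξ ⟨l - 1, by omega⟩))) / p‖^2) / (p : ℝ)^D
      ≤ (∑ x : Fin D → ZMod p,
          ‖(∑ y' : ZMod p, star (θ y')
              * (∏ i ∈ Finset.univ.filter (fun i : Fin k => i.val + 1 < l),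
                  star (f i (x + P i y' • v i)))
              * ∏ i ∈ Finset.univ.filter (fun i : Fin k => l ≤ i.val + 1),
                  ep p (-(P i y' * ξ i))) / p‖^2) / (p : ℝ)^D := by
  have hp : 0 < p := (Fact.out : p.Prime).pos
  set li : Fin k := ⟨l - 1, by omega⟩ with hli
  set V := v li with hV
  set ξl := ξ li with hξl
  set Pl := P li with hPl
  set T : (Fin D → ZMod p) → ZMod p → ZMod p → ℂ := fun z y y' =>
    θ y * star (θ y')
      * (∏ i ∈ Finset.univ.filter (fun i : Fin k => i.val + 1 < l),
          f i (z + P i y • v i - Pl y' • V) * star (f i (z + P i y' • v i - Pl y' • V)))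
      * f li (z + Pl y • V - Pl y' • V)
      * ∏ i ∈ Finset.univ.filter (fun i : Fin k => l ≤ i.val),
          ep p ((P i y - P i y') * ξ i) with hT
  have hFdual : ∀ z, Fdual p D k l (by omega) hlk θ f v P ξ z
      = (∑ y : ZMod p, ∑ y' : ZMod p, T z y y') / ((p:ℂ)*p) := fun z => rfl
  set c : (Fin D → ZMod p) → ZMod p → ZMod p → ℂ := fun x n y =>
    θ y * (∏ i ∈ Finset.univ.filter (fun i : Fin k => i.val + 1 < l),
        f i (x + n • V + P i y • v i))
      * f li (x + n • V + Pl y • V)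
      * (∏ i ∈ Finset.univ.filter (fun i : Fin k => l ≤ i.val), ep p (P i y * ξ i))
      * ep p (-(n * ξl)) with hc
  set g : (Fin D → ZMod p) → ZMod p → ℂ := fun z y' =>
    star (θ y') * (∏ i ∈ Finset.univ.filter (fun i : Fin k => i.val + 1 < l),
        star (f i (z + P i y' • v i)))
      * ∏ i ∈ Finset.univ.filter (fun i : Fin k => l ≤ i.val + 1),
          ep p (-(P i y' * ξ i)) with hg
  have hsplit : Finset.univ.filter (fun i : Fin k => l ≤ i.val + 1)
      = insert li (Finset.univ.filter (fun i : Fin k => l ≤ i.val)) := by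
    ext i
    simp only [mem_filter, mem_univ, true_and, mem_insert, Fin.ext_iff]
    have h2 := i.isLt
    have hval : li.val = l - 1 := rfl
    omega
  have hnotmem : li ∉ Finset.univ.filter (fun i : Fin k => l ≤ i.val) := by
    simp only [mem_filter, mem_univ, true_and]
    have hval : li.val = l - 1 := rfl
    omega
  have point : ∀ (x : Fin D → ZMod p) (n y y' : ZMod p),
      T (x + (n + Pl y') • V) y y' * ep p (-((n + Pl y') * ξl))
        = c x n y * g (x + n • V) y' := by
    intro x n y y'
    have hvec : ∀ w : Fin D → ZMod p,
        x + (n + Pl y') • V + w - Pl y' • V = x + n • V + w := by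
      intro w; rw [add_smul]; abel
    simp only [hT, hc, hg, hvec]
    rw [Finset.prod_mul_distrib]
    have hepprod : ∏ i ∈ Finset.univ.filter (fun i : Fin k => l ≤ i.val),
        ep p ((P i y - P i y') * ξ i)
        = (∏ i ∈ Finset.univ.filter (fun i : Fin k => l ≤ i.val), ep p (P i y * ξ i))
          * ∏ i ∈ Finset.univ.filter (fun i : Fin k => l ≤ i.val), ep p (-(P i y' * ξ i)) := by
      rw [← Finset.prod_mul_distrib]
      refine Finset.prod_congr rfl fun i _ => ?_
      rw [← ep_add]; congr 1; ring
    rw [hepprod, hsplit, Finset.prod_insert hnotmem]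
    have hchar : ep p (-((n + Pl y') * ξl)) = ep p (-(n * ξl)) * ep p (-(Pl y' * ξl)) := by
      rw [← ep_add]; congr 1; ring
    rw [hchar]
    ring
  have swap : ∀ (F : ZMod p → ZMod p → ZMod p → ℂ),
      (∑ n : ZMod p, ∑ y : ZMod p, ∑ y' : ZMod p, F n y y')
        = ∑ y' : ZMod p, ∑ n : ZMod p, ∑ y : ZMod p, F n y y' := by
    intro F
    calc (∑ n : ZMod p, ∑ y : ZMod p, ∑ y' : ZMod p, F n y y')
        = ∑ n : ZMod p, ∑ y' : ZMod p, ∑ y : ZMod p, F n y y' :=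
          Finset.sum_congr rfl fun n _ => Finset.sum_comm
      _ = ∑ y' : ZMod p, ∑ n : ZMod p, ∑ y : ZMod p, F n y y' := Finset.sum_comm
  have factor : ∀ x : Fin D → ZMod p,
      (∑ n : ZMod p, Fdual p D k l (by omega) hlk θ f v P ξ (x + n • V) * ep p (-(n * ξl)))
        = (∑ n : ZMod p, (∑ y : ZMod p, c x n y) * (∑ y' : ZMod p, g (x + n • V) y'))
            / ((p:ℂ)*p) := by
    intro x
    simp only [hFdual, div_mul_eq_mul_div]
    rw [← Finset.sum_div]
    congr 1
    simp only [Finset.sum_mul, Finset.mul_sum]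
    rw [swap (fun n y y' => T (x + n • V) y y' * ep p (-(n * ξl)))]
    conv_rhs => rw [Finset.sum_comm]
    refine Finset.sum_congr rfl fun y' _ => ?_
    rw [← Equiv.sum_comp (Equiv.addRight (Pl y'))
        (fun n => ∑ y : ZMod p, T (x + n • V) y y' * ep p (-(n * ξl)))]
    refine Finset.sum_congr rfl fun n _ => Finset.sum_congr rfl fun y _ => ?_
    simpa using point x n y y'
  have hpR : (0:ℝ) < p := by exact_mod_cast hp
  have habs1 : ∀ (s : Finset (Fin k)) (F : Fin k → ℂ), (∀ i, ‖F i‖ ≤ 1) →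
      ‖∏ i ∈ s, F i‖ ≤ 1 := by
    intro s F hF
    rw [norm_prod]
    exact Finset.prod_le_one (fun i _ => norm_nonneg _) (fun i _ => hF i)
  have cle : ∀ (x : Fin D → ZMod p) (n y : ZMod p), ‖c x n y‖ ≤ 1 := by
    intro x n y
    simp only [hc, norm_mul]
    have e1 := hθ y
    have e2 := habs1 (Finset.univ.filter (fun i : Fin k => i.val + 1 < l))
      (fun i => f i (x + n • V + P i y • v i)) (fun i => hf i _)
    have e3 := hf li (x + n • V + Pl y • V)
    have e4 := habs1 (Finset.univ.filter (fun i : Fin k => l ≤ i.val))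
      (fun i => ep p (P i y * ξ i)) (fun i => le_of_eq (abs_ep p _))
    have e5 : ‖ep p (-(n * ξl))‖ ≤ 1 := le_of_eq (abs_ep p _)
    exact mul_le_one₀ (mul_le_one₀ (mul_le_one₀ (mul_le_one₀ e1 (norm_nonneg _) e2)
      (norm_nonneg _) e3) (norm_nonneg _) e4) (norm_nonneg _) e5
  have Cbound : ∀ (x : Fin D → ZMod p) (n : ZMod p),
      ‖∑ y : ZMod p, c x n y‖ ≤ p := by
    intro x n
    calc ‖∑ y : ZMod p, c x n y‖ ≤ ∑ y : ZMod p, ‖c x n y‖ :=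
          norm_sum_le _ _
      _ ≤ ∑ _y : ZMod p, (1:ℝ) := Finset.sum_le_sum fun y _ => cle x n y
      _ = p := by simp [Finset.card_univ, ZMod.card]
  set Hf : (Fin D → ZMod p) → ℝ := fun z => ‖(∑ y' : ZMod p, g z y') / p‖ with hHf
  have hHeq : ∀ z, Hf z = ‖∑ y' : ZMod p, g z y'‖ / p := by
    intro z; simp [hHf, norm_div, Complex.norm_natCast]
  have keyx : ∀ x : Fin D → ZMod p,
      (‖(∑ n : ZMod p, Fdual p D k l (by omega) hlk θ f v P ξ (x + n • V)
          * ep p (-(n * ξl))) / p‖)^2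
        ≤ (∑ n : ZMod p, Hf (x + n • V)^2) / p := by
    intro x
    have h1 : ‖(∑ n : ZMod p, Fdual p D k l (by omega) hlk θ f v P ξ (x + n • V)
          * ep p (-(n * ξl))) / p‖ ≤ (∑ n : ZMod p, Hf (x + n • V)) / p := by
      rw [factor x]
      have hS : ‖∑ n : ZMod p,
            (∑ y : ZMod p, c x n y) * (∑ y' : ZMod p, g (x + n • V) y')‖
          ≤ ∑ n : ZMod p, (p:ℝ) * ‖∑ y' : ZMod p, g (x + n • V) y'‖ := by
        refine le_trans (norm_sum_le _ _) (Finset.sum_le_sum fun n _ => ?_)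
        rw [norm_mul]
        exact mul_le_mul_of_nonneg_right (Cbound x n) (norm_nonneg _)
      calc ‖(∑ n : ZMod p,
              (∑ y : ZMod p, c x n y) * (∑ y' : ZMod p, g (x + n • V) y')) / ((p:ℂ)*p) / p‖
          = ‖∑ n : ZMod p,
              (∑ y : ZMod p, c x n y) * (∑ y' : ZMod p, g (x + n • V) y')‖ / ((p:ℝ)*p*p) := by
            rw [div_div, norm_div]; congr 1; simp [norm_mul, Complex.norm_natCast]
        _ ≤ (∑ n : ZMod p, (p:ℝ) * ‖∑ y' : ZMod p, g (x + n • V) y'‖)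
              / ((p:ℝ)*p*p) := by
            exact div_le_div_of_nonneg_right hS (by positivity)
        _ = (∑ n : ZMod p, Hf (x + n • V)) / p := by
            rw [← Finset.mul_sum]
            have h3 : (∑ n : ZMod p, Hf (x + n • V))
                = (∑ n : ZMod p, ‖∑ y' : ZMod p, g (x + n • V) y'‖) / p := by
              rw [Finset.sum_div]; exact Finset.sum_congr rfl fun n _ => hHeq _
            rw [h3]; field_simp
    have h2 : (0:ℝ) ≤ ‖(∑ n : ZMod p, Fdual p D k l (by omega) hlk θ f v P ξ
        (x + n • V) * ep p (-(n * ξl))) / p‖ := norm_nonneg _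
    calc (‖(∑ n : ZMod p, Fdual p D k l (by omega) hlk θ f v P ξ (x + n • V)
            * ep p (-(n * ξl))) / p‖)^2
        ≤ ((∑ n : ZMod p, Hf (x + n • V)) / p)^2 := pow_le_pow_left₀ h2 h1 2
      _ = (∑ n : ZMod p, Hf (x + n • V))^2 / (p:ℝ)^2 := by rw [div_pow]
      _ ≤ ((p:ℝ) * ∑ n : ZMod p, Hf (x + n • V)^2) / (p:ℝ)^2 := by
          refine (div_le_div_iff_of_pos_right (by positivity)).mpr ?_
          have := sq_sum_le_card_mul_sum_sq (s := (Finset.univ : Finset (ZMod p)))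
            (f := fun n => Hf (x + n • V))
          simpa [Finset.card_univ, ZMod.card] using this
      _ = (∑ n : ZMod p, Hf (x + n • V)^2) / p := by
          field_simp
  have main : (∑ x : Fin D → ZMod p,
        (‖(∑ n : ZMod p, Fdual p D k l (by omega) hlk θ f v P ξ (x + n • V)
            * ep p (-(n * ξl))) / p‖)^2)
      ≤ ∑ x : Fin D → ZMod p, Hf x ^ 2 := by
    calc (∑ x : Fin D → ZMod p,
          (‖(∑ n : ZMod p, Fdual p D k l (by omega) hlk θ f v P ξ (x + n • V)
              * ep p (-(n * ξl))) / p‖)^2)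
        ≤ ∑ x : Fin D → ZMod p, (∑ n : ZMod p, Hf (x + n • V)^2)/p :=
          Finset.sum_le_sum fun x _ => keyx x
      _ = (∑ x : Fin D → ZMod p, ∑ n : ZMod p, Hf (x + n • V)^2)/p := by
          rw [Finset.sum_div]
      _ = (∑ n : ZMod p, ∑ x : Fin D → ZMod p, Hf (x + n • V)^2)/p := by
          rw [Finset.sum_comm]
      _ = (∑ n : ZMod p, ∑ x : Fin D → ZMod p, Hf x ^2)/p := by
          congr 1
          exact Finset.sum_congr rfl fun n _ =>
            Fintype.sum_equiv (Equiv.addRight (n • V)) _ _ (fun x => rfl)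
      _ = ∑ x : Fin D → ZMod p, Hf x ^2 := by
          rw [Finset.sum_const, Finset.card_univ, ZMod.card, nsmul_eq_mul]
          field_simp
  have hpD : (0:ℝ) < (p:ℝ)^D := by positivity
  refine div_le_div_of_nonneg_right ?_ hpD.le
  exact main
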